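/- arXiv:2604.09460 — 6 statements merged into one kernel-verified Lean document; each statement's English description precedes it below -/
import Mathlib

section
/- If Y ⊆ X is compact (in the product topology), then Ψ(Y) is compact. -/
open Set

section Setup

variable {N : Type*} [Fintype N] [DecidableEq N] {Z : N → Type*}

/-- A stage-game action profile. -/
abbrev Profile (Z : N → Type*) := ∀ i, Z i

/-- An infinite path of action profiles. -/
abbrev RPath (Z : N → Type*) := ℕ → Profile Z

/-- The profile played in period `τ` when coalition `C` deviates to `ζ` (off `C`, players follow `x τ`). -/
def devProfile (x : RPath Z) (C : Finset N) (τ : ℕ) (ζ : Profile Z) : Profile Z :=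
  fun i => if i ∈ C then ζ i else x τ i

/-- The spliced path `(x; ζ^C_τ; y)`: follow `x` before period `τ`, play the deviation profile at `τ`,
and follow `y` afterwards.  Periods are indexed from `0`. -/
def splice (x : RPath Z) (C : Finset N) (τ : ℕ) (ζ : Profile Z) (y : RPath Z) : RPath Z :=
  fun t => if t < τ then x t else if t = τ then devProfile x C τ ζ else y (t - τ - 1)

/-- Discounted payoff `U_i(x) = (1-δ) ∑ δ^t u_i(x_t)`. -/
noncomputable def disc (u : N → Profile Z → ℝ) (δ : ℝ) (i : N) (x : RPath Z) : ℝ :=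
  (1 - δ) * ∑' t : ℕ, δ ^ t * u i (x t)

/-- The coalitional enforceability operator `Ψ`. -/
def Psi (u : N → Profile Z → ℝ) (δ : ℝ) (Y : Set (RPath Z)) : Set (RPath Z) :=
  {x | ∀ C : Finset N, C.Nonempty → ∀ τ : ℕ, ∀ ζ : Profile Z,
    ∃ p : N → RPath Z, (∀ i, p i ∈ Y) ∧
      ∃ i ∈ C, disc u δ i x ≥ disc u δ i (splice x C τ ζ (p i))}

/-- A history (position) is a finite list of past action profiles. -/
abbrev Hist (Z : N → Type*) := List (Profile Z)

/-- The history reached after `n` periods of following plan `f` from history `h`. -/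
def planHist (f : Hist Z → Profile Z) (h : Hist Z) : ℕ → Hist Z
  | 0 => h
  | n + 1 => planHist f h n ++ [f (planHist f h n)]

/-- The continuation path prescribed by plan `f` after history `h`. -/
def planPath (f : Hist Z → Profile Z) (h : Hist Z) : RPath Z :=
  fun n => f (planHist f h n)

/-- The position induced from `G` when coalition `C` deviates from path `x` in period `τ` via `ζ`. -/
def devHistory (G : Hist Z) (x : RPath Z) (C : Finset N) (τ : ℕ) (ζ : Profile Z) : Hist Z :=
  G ++ (List.ofFn fun t : Fin τ => x t) ++ [devProfile x C τ ζ]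

/-- A Perfect Coalitional Equilibrium: after every history, every one-shot coalitional deviation
leaves some member of the deviating coalition no better off, given the plan's continuation. -/
def IsPCE (u : N → Profile Z → ℝ) (δ : ℝ) (f : Hist Z → Profile Z) : Prop :=
  ∀ h : Hist Z, ∀ C : Finset N, C.Nonempty → ∀ τ : ℕ, ∀ ζ : Profile Z,
    ∃ i ∈ C, disc u δ i (planPath f h) ≥
      disc u δ i (splice (planPath f h) C τ ζ (planPath f (devHistory h (planPath f h) C τ ζ)))

/-- The set of Perfect Coalitional Equilibrium paths. -/
def PCEP (u : N → Profile Z → ℝ) (δ : ℝ) : Set (RPath Z) :=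
  {x | ∃ f : Hist Z → Profile Z, IsPCE u δ f ∧ planPath f [] = x}

/-- Payoff at position `G`: `u_i(G)(x) = a_i(G) + δ^{|G|} U_i(x)`. -/
noncomputable def posPayoff (u : N → Profile Z → ℝ) (δ : ℝ) (i : N) (G : Hist Z)
    (x : RPath Z) : ℝ :=
  (1 - δ) * (∑ t : Fin G.length, δ ^ (t : ℕ) * u i (G.get t)) + δ ^ G.length * disc u δ i x

/-- The conservative dominion of position `G` relative to the standard of behavior `σ`. -/
def CDOM (u : N → Profile Z → ℝ) (δ : ℝ) (σ : Hist Z → Set (RPath Z)) (G : Hist Z) :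
    Set (RPath Z) :=
  {x | ∃ C : Finset N, C.Nonempty ∧ ∃ τ : ℕ, ∃ ζ : Profile Z,
    (σ (devHistory G x C τ ζ)).Nonempty ∧
    ∀ y ∈ σ (devHistory G x C τ ζ), ∀ i ∈ C,
      posPayoff u δ i (devHistory G x C τ ζ) y > posPayoff u δ i G x}

/-- A standard of behavior is nondiscriminating if it assigns the same set to every position. -/
def Nondiscriminating (σ : Hist Z → Set (RPath Z)) : Prop := ∀ G H, σ G = σ H

/-- Conservative internal stability. -/
def ConsInternallyStable (u : N → Profile Z → ℝ) (δ : ℝ) (σ : Hist Z → Set (RPath Z)) : Prop :=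
  ∀ G, σ G ∩ CDOM u δ σ G = ∅

/-- Conservative external stability. -/
def ConsExternallyStable (u : N → Profile Z → ℝ) (δ : ℝ) (σ : Hist Z → Set (RPath Z)) : Prop :=
  ∀ G, (σ G)ᶜ ⊆ CDOM u δ σ G

end Setup

section AuxProof
set_option linter.unusedSectionVars false

variable {N : Type*} [Fintype N] [DecidableEq N] {Z : N → Type*}
  [∀ i, MetricSpace (Z i)] [∀ i, CompactSpace (Z i)] [∀ i, Nonempty (Z i)]

lemma my_disc_continuous (u : N → Profile Z → ℝ) (δ : ℝ) (i : N)
    (hu : Continuous (u i)) (hδ0 : 0 ≤ δ) (hδ1 : δ < 1) :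
    Continuous (disc u δ i) := by
  obtain ⟨M, hM⟩ : ∃ M, ∀ z : Profile Z, ‖u i z‖ ≤ M := by
    obtain ⟨M, hM⟩ := isCompact_univ.exists_bound_of_continuousOn (hu.norm.continuousOn)
    exact ⟨M, fun z => by simpa using hM z (mem_univ z)⟩
  unfold disc
  apply Continuous.mul continuous_const
  apply continuous_tsum (u := fun t => δ ^ t * M)
  · intro t; exact continuous_const.mul (hu.comp (continuous_apply t))
  · exact (summable_geometric_of_lt_one hδ0 hδ1).mul_right M
  · intro t x
    calc ‖δ ^ t * u i (x t)‖ = δ ^ t * ‖u i (x t)‖ := by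
          rw [norm_mul, Real.norm_of_nonneg (pow_nonneg hδ0 t)]
      _ ≤ δ ^ t * M := mul_le_mul_of_nonneg_left (hM _) (pow_nonneg hδ0 t)

lemma my_splice_continuous (C : Finset N) (τ : ℕ) (ζ : Profile Z) :
    Continuous (fun p : RPath Z × RPath Z => splice p.1 C τ ζ p.2) := by
  apply continuous_pi; intro t
  unfold splice devProfile
  by_cases h1 : t < τ
  · simp only [if_pos h1]
    exact (continuous_apply t).comp continuous_fst
  · simp only [if_neg h1]
    by_cases h2 : t = τ
    · simp only [if_pos h2]
      apply continuous_pi; intro i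
      by_cases hi : i ∈ C
      · simp only [if_pos hi]; exact continuous_const
      · simp only [if_neg hi]
        exact (continuous_apply i).comp ((continuous_apply τ).comp continuous_fst)
    · simp only [if_neg h2]
      exact (continuous_apply (t - τ - 1)).comp continuous_snd

end AuxProof


theorem psi_compact {N : Type*} [Fintype N] [DecidableEq N] {Z : N → Type*}
    [∀ i, MetricSpace (Z i)] [∀ i, CompactSpace (Z i)] [∀ i, Nonempty (Z i)]
    (u : N → Profile Z → ℝ) (δ : ℝ)
    (hu : ∀ i, Continuous (u i)) (hδ0 : 0 < δ) (hδ1 : δ < 1)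
    {Y : Set (RPath Z)} (hY : IsCompact Y) :
    IsCompact (Psi u δ Y) := by
  classical
  -- It suffices to show `Psi u δ Y` is closed, since the ambient space is compact.
  suffices hcl : IsClosed (Psi u δ Y) from hcl.isCompact
  by_cases hN : Nonempty N
  case neg =>
    have : Psi u δ Y = univ := by
      ext x
      simp only [Psi, mem_setOf_eq, mem_univ, iff_true]
      intro C hC τ ζ
      exact (hN ⟨hC.choose⟩).elim
    rw [this]; exact isClosed_univ
  case pos =>
    rcases Y.eq_empty_or_nonempty with hYe | ⟨y0, hy0⟩
    · have : Psi u δ Y = ∅ := by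
        ext x
        simp only [Psi, mem_setOf_eq, mem_empty_iff_false, iff_false]
        intro h
        obtain ⟨i0⟩ := hN
        obtain ⟨p, hp, -⟩ := h {i0} ⟨i0, Finset.mem_singleton_self i0⟩ 0
          (Classical.arbitrary _)
        exact absurd (hp i0) (by simp [hYe])
      rw [this]; exact isClosed_empty
    · -- The key closed pieces
      set S : N → Finset N → ℕ → Profile Z → Set (RPath Z) := fun i C τ ζ =>
        {x | ∃ y ∈ Y, disc u δ i x ≥ disc u δ i (splice x C τ ζ y)} with hS
      have hSclosed : ∀ i C τ ζ, IsClosed (S i C τ ζ) := by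
        intro i C τ ζ
        set K : Set (RPath Z × RPath Z) :=
          (univ ×ˢ Y) ∩ {q | disc u δ i q.1 ≥ disc u δ i (splice q.1 C τ ζ q.2)} with hK
        have hKc : IsCompact K := by
          apply (isCompact_univ.prod hY).inter_right
        -- closedness of the inequality set
          exact isClosed_le
            ((my_disc_continuous u δ i (hu i) hδ0.le hδ1).comp
              (my_splice_continuous C τ ζ))
            ((my_disc_continuous u δ i (hu i) hδ0.le hδ1).comp continuous_fst)
        have hSeq : S i C τ ζ = Prod.fst '' K := by
          ext x
          constructor
          · rintro ⟨y, hyY, hge⟩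
            exact ⟨(x, y), ⟨⟨mem_univ _, hyY⟩, hge⟩, rfl⟩
          · rintro ⟨⟨a, b⟩, ⟨⟨-, hbY⟩, hge⟩, rfl⟩
            exact ⟨b, hbY, hge⟩
        rw [hSeq]
        exact (hKc.image continuous_fst).isClosed
      have hPsiEq : Psi u δ Y =
          ⋂ C : Finset N, ⋂ (_ : C.Nonempty), ⋂ τ : ℕ, ⋂ ζ : Profile Z,
            ⋃ i ∈ C, S i C τ ζ := by
        ext x
        simp only [Psi, mem_setOf_eq, mem_iInter, mem_iUnion, hS]
        constructor
        · intro h C hC τ ζ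
          obtain ⟨p, hp, i, hiC, hge⟩ := h C hC τ ζ
          exact ⟨i, hiC, p i, hp i, hge⟩
        · intro h C hC τ ζ
          obtain ⟨i, hiC, y, hyY, hge⟩ := h C hC τ ζ
          refine ⟨fun _ => y, fun _ => hyY, i, hiC, hge⟩
      rw [hPsiEq]
      refine isClosed_iInter fun C => isClosed_iInter fun _ => isClosed_iInter fun τ =>
        isClosed_iInter fun ζ => ?_
      exact (C.finite_toSet).isClosed_biUnion fun i _ => hSclosed i C τ ζ
end

section
/- If Y ⊆ X satisfies Y ⊆ Ψ(Y) (self-generation), then every path in Y is the equilibrium path of a Perfect Coalitional Equilibrium; that is, Y ⊆ PCEP. -/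
open Set

section SelfGenProof

open scoped Classical

set_option linter.unusedSectionVars false

variable {N : Type*} [Fintype N] [DecidableEq N] {Z : N → Type*}
variable (u : N → Profile Z → ℝ) (δ : ℝ) {Y : Set (RPath Z)}

/-- The minimal deviating coalition. -/
noncomputable def devCoal (y : RPath Z) (k : ℕ) (a : Profile Z) : Finset N :=
  @Finset.filter N (fun i => a i ≠ y k i) (Classical.decPred _) Finset.univ

lemma mem_devCoal {y : RPath Z} {k : ℕ} {a : Profile Z} {i : N} :
    i ∈ devCoal y k a ↔ a i ≠ y k i := by
  simp [devCoal]

lemma devCoal_nonempty {y : RPath Z} {k : ℕ} {a : Profile Z} (h : ¬ a = y k) :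
    (devCoal y k a).Nonempty := by
  by_contra hc
  exact h (funext fun i => by
    by_contra hne
    exact hc ⟨i, mem_devCoal.2 hne⟩)

/-- Index of the punished player, from the self-generation condition. -/
noncomputable def punIdx (hself : Y ⊆ Psi u δ Y) {y : RPath Z} (hy : y ∈ Y)
    (C : Finset N) (hC : C.Nonempty) (τ : ℕ) (ζ : Profile Z) : N :=
  (hself hy C hC τ ζ).choose_spec.2.choose

/-- The punishment continuation path. -/
noncomputable def punish (hself : Y ⊆ Psi u δ Y) {y : RPath Z} (hy : y ∈ Y)
    (C : Finset N) (hC : C.Nonempty) (τ : ℕ) (ζ : Profile Z) : RPath Z :=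
  (hself hy C hC τ ζ).choose (punIdx u δ hself hy C hC τ ζ)

lemma punish_mem (hself : Y ⊆ Psi u δ Y) {y : RPath Z} (hy : y ∈ Y)
    (C : Finset N) (hC : C.Nonempty) (τ : ℕ) (ζ : Profile Z) :
    punish u δ hself hy C hC τ ζ ∈ Y :=
  (hself hy C hC τ ζ).choose_spec.1 _

lemma punIdx_mem (hself : Y ⊆ Psi u δ Y) {y : RPath Z} (hy : y ∈ Y)
    (C : Finset N) (hC : C.Nonempty) (τ : ℕ) (ζ : Profile Z) :
    punIdx u δ hself hy C hC τ ζ ∈ C :=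
  (hself hy C hC τ ζ).choose_spec.2.choose_spec.1

lemma punish_spec (hself : Y ⊆ Psi u δ Y) {y : RPath Z} (hy : y ∈ Y)
    (C : Finset N) (hC : C.Nonempty) (τ : ℕ) (ζ : Profile Z) :
    disc u δ (punIdx u δ hself hy C hC τ ζ) y ≥
      disc u δ (punIdx u δ hself hy C hC τ ζ)
        (splice y C τ ζ (punish u δ hself hy C hC τ ζ)) :=
  (hself hy C hC τ ζ).choose_spec.2.choose_spec.2

/-- The transition on states `(current Y-path, shift)`. -/
noncomputable def myStep (hself : Y ⊆ Psi u δ Y) (s : {y : RPath Z // y ∈ Y} × ℕ)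
    (a : Profile Z) : {y : RPath Z // y ∈ Y} × ℕ :=
  if h : a = s.1.1 s.2 then (s.1, s.2 + 1)
  else (⟨punish u δ hself s.1.2 (devCoal s.1.1 s.2 a) (devCoal_nonempty h) s.2 a,
        punish_mem u δ hself s.1.2 _ _ _ _⟩, 0)

lemma myStep_pos (hself : Y ⊆ Psi u δ Y) (s : {y : RPath Z // y ∈ Y} × ℕ)
    {a : Profile Z} (h : a = s.1.1 s.2) :
    myStep u δ hself s a = (s.1, s.2 + 1) := by
  rw [myStep, dif_pos h]

lemma myStep_neg (hself : Y ⊆ Psi u δ Y) (s : {y : RPath Z // y ∈ Y} × ℕ)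
    {a : Profile Z} (h : ¬ a = s.1.1 s.2) :
    (myStep u δ hself s a).2 = 0 ∧
    ∃ i₀ ∈ devCoal s.1.1 s.2 a,
      disc u δ i₀ s.1.1 ≥
        disc u δ i₀ (splice s.1.1 (devCoal s.1.1 s.2 a) s.2 a
          ((myStep u δ hself s a).1.1)) := by
  rw [myStep, dif_neg h]
  exact ⟨rfl, punIdx u δ hself s.1.2 _ (devCoal_nonempty h) s.2 a,
    punIdx_mem u δ hself s.1.2 _ _ _ _, punish_spec u δ hself s.1.2 _ _ _ _⟩

/-- The state reached after a (reversed) history. -/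
noncomputable def stRev (hself : Y ⊆ Psi u δ Y) (x : RPath Z) (hx : x ∈ Y) :
    Hist Z → ({y : RPath Z // y ∈ Y} × ℕ)
  | [] => (⟨x, hx⟩, 0)
  | a :: r => myStep u δ hself (stRev hself x hx r) a

/-- The state reached after a history. -/
noncomputable def stH (hself : Y ⊆ Psi u δ Y) (x : RPath Z) (hx : x ∈ Y)
    (h : Hist Z) : {y : RPath Z // y ∈ Y} × ℕ :=
  stRev u δ hself x hx h.reverse

/-- The constructed plan. -/
noncomputable def fplan (hself : Y ⊆ Psi u δ Y) (x : RPath Z) (hx : x ∈ Y)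
    (h : Hist Z) : Profile Z :=
  (stH u δ hself x hx h).1.1 (stH u δ hself x hx h).2

lemma stH_append (hself : Y ⊆ Psi u δ Y) (x : RPath Z) (hx : x ∈ Y)
    (h : Hist Z) (a : Profile Z) :
    stH u δ hself x hx (h ++ [a]) = myStep u δ hself (stH u δ hself x hx h) a := by
  simp [stH, stRev]

lemma stH_planHist (hself : Y ⊆ Psi u δ Y) (x : RPath Z) (hx : x ∈ Y)
    (h : Hist Z) (n : ℕ) :
    stH u δ hself x hx (planHist (fplan u δ hself x hx) h n) =
      ((stH u δ hself x hx h).1, (stH u δ hself x hx h).2 + n) := by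
  induction n with
  | zero => simp [planHist]
  | succ n ih =>
      rw [planHist, stH_append]
      have ha : fplan u δ hself x hx (planHist (fplan u δ hself x hx) h n) =
          (stH u δ hself x hx h).1.1 ((stH u δ hself x hx h).2 + n) := by
        rw [fplan, ih]
      rw [ih, myStep_pos u δ hself _ ha]
      rfl

lemma planPath_eq (hself : Y ⊆ Psi u δ Y) (x : RPath Z) (hx : x ∈ Y)
    (h : Hist Z) (n : ℕ) :
    planPath (fplan u δ hself x hx) h n =
      (stH u δ hself x hx h).1.1 ((stH u δ hself x hx h).2 + n) := by
  rw [planPath, fplan, stH_planHist]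

lemma planHist_eq_ofFn {f : Hist Z → Profile Z} (h : Hist Z) (n : ℕ) :
    planHist f h n = h ++ List.ofFn (fun t : Fin n => planPath f h (t : ℕ)) := by
  induction n with
  | zero => simp [planHist]
  | succ n ih =>
      rw [planHist, ih, List.ofFn_succ']
      simp [planPath, List.concat_eq_append, ih]

lemma summable_aux {i : N} {M : ℝ} (hδ0 : 0 ≤ δ) (hδ1 : δ < 1)
    (hM : ∀ p, |u i p| ≤ M) (v : RPath Z) :
    Summable (fun t => δ ^ t * u i (v t)) := by
  refine Summable.of_norm_bounded (g := fun t => δ ^ t * M)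
    ((summable_geometric_of_lt_one hδ0 hδ1).mul_right M) (fun t => ?_)
  rw [Real.norm_eq_abs, abs_mul, abs_pow, abs_of_nonneg hδ0]
  exact mul_le_mul_of_nonneg_left (hM _) (pow_nonneg hδ0 t)

lemma disc_split {i : N} {M : ℝ} (hδ0 : 0 ≤ δ) (hδ1 : δ < 1)
    (hM : ∀ p, |u i p| ≤ M) (m : ℕ) (w z : RPath Z)
    (hw : ∀ t, m ≤ t → w t = z (t - m)) :
    disc u δ i w =
      (1 - δ) * (∑ t ∈ Finset.range m, δ ^ t * u i (w t)) + δ ^ m * disc u δ i z := by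
  have hs := summable_aux u δ hδ0 hδ1 hM w
  have hz := summable_aux u δ hδ0 hδ1 hM z
  have key : ∀ t : ℕ, δ ^ (t + m) * u i (w (t + m)) = δ ^ m * (δ ^ t * u i (z t)) := by
    intro t
    rw [hw (t + m) (Nat.le_add_left _ _), Nat.add_sub_cancel, pow_add]
    ring
  rw [disc, ← hs.sum_add_tsum_nat_add m, tsum_congr key, tsum_mul_left, disc]
  ring

end SelfGenProof

theorem self_generation_subset_PCEP {N : Type*} [Fintype N] [DecidableEq N] {Z : N → Type*}
    [∀ i, MetricSpace (Z i)] [∀ i, CompactSpace (Z i)] [∀ i, Nonempty (Z i)]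
    (u : N → Profile Z → ℝ) (δ : ℝ)
    (hu : ∀ i, Continuous (u i)) (hδ0 : 0 < δ) (hδ1 : δ < 1)
    {Y : Set (RPath Z)} (hself : Y ⊆ Psi u δ Y) :
    Y ⊆ PCEP u δ := by
  intro x hx
  -- boundedness of payoffs
  have hbound : ∀ i : N, ∃ M : ℝ, ∀ p : Profile Z, |u i p| ≤ M := by
    intro i
    obtain ⟨M, hM⟩ := (isCompact_range (hu i)).isBounded.exists_norm_le
    exact ⟨M, fun p => by simpa [Real.norm_eq_abs] using hM _ ⟨p, rfl⟩⟩
  set f := fplan u δ hself x hx with hf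
  refine ⟨f, ?_, ?_⟩
  · intro h C hC τ ζ
    set s := stH u δ hself x hx h with hs
    have hpp : ∀ n, planPath f h n = s.1.1 (s.2 + n) := fun n =>
      planPath_eq u δ hself x hx h n
    set a := devProfile (planPath f h) C τ ζ with ha
    have hH : devHistory h (planPath f h) C τ ζ =
        planHist f h τ ++ [a] := by
      rw [devHistory, planHist_eq_ofFn]
    have hstep : stH u δ hself x hx (devHistory h (planPath f h) C τ ζ) =
        myStep u δ hself (s.1, s.2 + τ) a := by
      rw [hH, stH_append, stH_planHist]
    by_cases hcase : a = s.1.1 (s.2 + τ)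
    · -- phantom deviation: the spliced path equals the original path
      obtain ⟨i, hi⟩ := hC
      refine ⟨i, hi, ?_⟩
      have h2 : stH u δ hself x hx (devHistory h (planPath f h) C τ ζ) =
          (s.1, s.2 + τ + 1) := by
        rw [hstep, myStep_pos u δ hself _ hcase]
      have heq : splice (planPath f h) C τ ζ
          (planPath f (devHistory h (planPath f h) C τ ζ)) = planPath f h := by
        funext t
        rw [splice]
        rcases lt_trichotomy t τ with h1 | h1 | h1
        · rw [if_pos h1]
        · subst h1
          rw [if_neg (lt_irrefl _), if_pos rfl, ← ha, hcase, hpp]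
        · rw [if_neg (show ¬ t < τ by omega), if_neg (show ¬ t = τ by omega),
            planPath_eq u δ hself x hx, h2, hpp]
          have harith : s.2 + τ + 1 + (t - τ - 1) = s.2 + t := by omega
          show s.1.1 (s.2 + τ + 1 + (t - τ - 1)) = s.1.1 (s.2 + t)
          rw [harith]
      rw [heq]
    · -- genuine deviation
      obtain ⟨h0, i₀, hi₀mem, hineq⟩ := myStep_neg u δ hself (s.1, s.2 + τ) hcase
      have hi₀ : a i₀ ≠ s.1.1 (s.2 + τ) i₀ := mem_devCoal.1 hi₀mem
      refine ⟨i₀, ?_, ?_⟩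
      · by_contra hiC
        apply hi₀
        rw [ha, devProfile]
        simp only [if_neg hiC]
        rw [hpp]
      · set q := (myStep u δ hself (s.1, s.2 + τ) a).1.1 with hq
        have hqe : planPath f (devHistory h (planPath f h) C τ ζ) = q := by
          funext n
          rw [planPath_eq u δ hself x hx, hstep, h0]
          show q (0 + n) = q n
          rw [Nat.zero_add]
        rw [hqe]
        -- splice comparison
        obtain ⟨M, hM⟩ := hbound i₀
        have hδ0' : (0:ℝ) ≤ δ := le_of_lt hδ0
        have hsplice : ∀ t, s.2 ≤ t →
            splice s.1.1 (devCoal s.1.1 (s.2 + τ) a) (s.2 + τ) a q t =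
              splice (planPath f h) C τ ζ q (t - s.2) := by
          intro t ht
          rw [splice, splice]
          rcases lt_trichotomy t (s.2 + τ) with h1 | h1 | h1
          · rw [if_pos h1, if_pos (show t - s.2 < τ by omega), hpp]
            have harith : s.2 + (t - s.2) = t := by omega
            show s.1.1 t = s.1.1 (s.2 + (t - s.2))
            rw [harith]
          · subst h1
            rw [if_neg (lt_irrefl _), if_pos rfl,
              if_neg (show ¬ s.2 + τ - s.2 < τ by omega),
              if_pos (show s.2 + τ - s.2 = τ by omega)]
            funext i
            rw [devProfile]
            by_cases hiC0 : i ∈ devCoal s.1.1 (s.2 + τ) a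
            · rw [if_pos hiC0]
            · rw [if_neg hiC0]
              have := mem_devCoal.not.1 hiC0
              push_neg at this
              exact this.symm
          · rw [if_neg (show ¬ t < s.2 + τ by omega), if_neg (show ¬ t = s.2 + τ by omega),
              if_neg (show ¬ t - s.2 < τ by omega), if_neg (show ¬ t - s.2 = τ by omega)]
            have harith : t - (s.2 + τ) - 1 = t - s.2 - τ - 1 := by omega
            show q (t - (s.2 + τ) - 1) = q (t - s.2 - τ - 1)
            rw [harith]
        have hpath : ∀ t, s.2 ≤ t → s.1.1 t = planPath f h (t - s.2) := by
          intro t ht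
          rw [hpp]
          have harith : s.2 + (t - s.2) = t := by omega
          show s.1.1 t = s.1.1 (s.2 + (t - s.2))
          rw [harith]
        have e1 := disc_split u δ (i := i₀) hδ0' hδ1 hM s.2 s.1.1 (planPath f h) hpath
        have e2 := disc_split u δ (i := i₀) hδ0' hδ1 hM s.2
          (splice s.1.1 (devCoal s.1.1 (s.2 + τ) a) (s.2 + τ) a q)
          (splice (planPath f h) C τ ζ q) hsplice
        have ehead : (∑ t ∈ Finset.range s.2,
              δ ^ t * u i₀ (splice s.1.1 (devCoal s.1.1 (s.2 + τ) a) (s.2 + τ) a q t)) =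
            ∑ t ∈ Finset.range s.2, δ ^ t * u i₀ (s.1.1 t) := by
          refine Finset.sum_congr rfl (fun t ht => ?_)
          rw [Finset.mem_range] at ht
          rw [splice, if_pos (by omega)]
        rw [e1, e2, ehead] at hineq
        have hpow : (0:ℝ) < δ ^ s.2 := pow_pos hδ0 _
        have hfin : δ ^ s.2 * disc u δ i₀ (splice (planPath f h) C τ ζ q) ≤
            δ ^ s.2 * disc u δ i₀ (planPath f h) := by linarith
        exact (mul_le_mul_iff_right₀ hpow).1 hfin
  · funext n
    rw [planPath_eq u δ hself x hx]
    show x (0 + n) = x n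
    rw [Nat.zero_add]
end

section
/- The set PCEP of Perfect Coalitional Equilibrium paths satisfies PCEP ⊆ Ψ(PCEP), i.e., PCEP is self-generating. -/
open Set

theorem PCEP_self_generating {N : Type*} [Fintype N] [DecidableEq N] {Z : N → Type*}
    [∀ i, MetricSpace (Z i)] [∀ i, CompactSpace (Z i)] [∀ i, Nonempty (Z i)]
    (u : N → Profile Z → ℝ) (δ : ℝ)
    (hu : ∀ i, Continuous (u i)) (hδ0 : 0 < δ) (hδ1 : δ < 1) :
    PCEP u δ ⊆ Psi u δ (PCEP u δ) := by
  rintro x ⟨f, hf, hx⟩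
  intro C hC τ ζ
  set H : Hist Z := devHistory [] x C τ ζ with hH
  set g : Hist Z → Profile Z := fun h => f (H ++ h) with hg
  have hist : ∀ h n, planHist f (H ++ h) n = H ++ planHist g h n := by
    intro h n
    induction n with
    | zero => rfl
    | succ n ih =>
      simp only [planHist, ih, hg, List.append_assoc]
  have hpath : ∀ h, planPath g h = planPath f (H ++ h) := by
    intro h
    funext n
    simp only [planPath, hist, hg]
  have hgPCE : IsPCE u δ g := by
    intro h C' hC' τ' ζ'
    obtain ⟨i, hi, hge⟩ := hf (H ++ h) C' hC' τ' ζ'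
    refine ⟨i, hi, ?_⟩
    have hdev : devHistory (H ++ h) (planPath f (H ++ h)) C' τ' ζ'
        = H ++ devHistory h (planPath f (H ++ h)) C' τ' ζ' := by
      simp [devHistory, List.append_assoc]
    simp only [hpath]
    rw [← hdev]
    exact hge
  refine ⟨fun _ => planPath g [], fun i => ⟨g, hgPCE, rfl⟩, ?_⟩
  obtain ⟨i, hi, hge⟩ := hf [] C hC τ ζ
  refine ⟨i, hi, ?_⟩
  have : planPath g [] = planPath f H := by
    rw [hpath]; simp
  rw [this, hH]
  simp only [hx] at hge ⊢
  simpa [devHistory] using hge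
end

section
/- The set PCEP of Perfect Coalitional Equilibrium paths is compact in the product topology on X = Z^ℕ. Moreover, PCEP equals X^∞ := ⋂_{k≥0} X^k, where X^0 = X and X^{k+1} = Ψ(X^k). -/
open Set

set_option linter.unusedSectionVars false
set_option linter.unusedTactic false
set_option maxHeartbeats 1000000

section AuxProof
variable {N : Type*} [Fintype N] [DecidableEq N] {Z : N → Type*}
    [∀ i, MetricSpace (Z i)] [∀ i, CompactSpace (Z i)] [∀ i, Nonempty (Z i)]
    (u : N → Profile Z → ℝ) (δ : ℝ)

lemma aux_bound (hu : ∀ i, Continuous (u i)) (i : N) : ∃ M : ℝ, 0 ≤ M ∧ ∀ z, |u i z| ≤ M := by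
  obtain ⟨z₀, -, hmax⟩ := isCompact_univ.exists_isMaxOn (f := fun z : Profile Z => |u i z|)
    Set.univ_nonempty ((hu i).abs.continuousOn)
  exact ⟨|u i z₀|, abs_nonneg _, fun z => hmax (mem_univ z)⟩

lemma aux_summable (hu : ∀ i, Continuous (u i)) (hδ0 : 0 < δ) (hδ1 : δ < 1) (i : N) (x : RPath Z) :
    Summable fun t : ℕ => δ ^ t * u i (x t) := by
  obtain ⟨M, hM0, hM⟩ := aux_bound u hu i
  refine Summable.of_norm_bounded (g := fun t => δ ^ t * M)
    ((summable_geometric_of_lt_one hδ0.le hδ1).mul_right M) ?_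
  intro t
  rw [Real.norm_eq_abs, abs_mul, abs_pow, abs_of_pos hδ0]
  exact mul_le_mul_of_nonneg_left (hM _) (pow_nonneg hδ0.le t)

lemma aux_continuous_disc (hu : ∀ i, Continuous (u i)) (hδ0 : 0 < δ) (hδ1 : δ < 1) (i : N) :
    Continuous (disc u δ i) := by
  obtain ⟨M, hM0, hM⟩ := aux_bound u hu i
  unfold disc
  refine continuous_const.mul (continuous_tsum (f := fun t (x : RPath Z) => δ ^ t * u i (x t))
    (u := fun t => δ ^ t * M) (fun t => continuous_const.mul ((hu i).comp (continuous_apply (A := fun _ : ℕ => Profile Z) t)))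
    ((summable_geometric_of_lt_one hδ0.le hδ1).mul_right M) ?_)
  intro t x
  rw [Real.norm_eq_abs, abs_mul, abs_pow, abs_of_pos hδ0]
  exact mul_le_mul_of_nonneg_left (hM _) (pow_nonneg hδ0.le t)

lemma aux_continuous_splice (C : Finset N) (τ : ℕ) (ζ : Profile Z) :
    Continuous fun p : RPath Z × RPath Z => splice p.1 C τ ζ p.2 := by
  refine continuous_pi fun t => ?_
  unfold splice devProfile
  by_cases h1 : t < τ
  · simp only [if_pos h1]
    exact (continuous_apply (A := fun _ : ℕ => Profile Z) t).comp continuous_fst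
  · simp only [if_neg h1]
    by_cases h2 : t = τ
    · simp only [if_pos h2]
      refine continuous_pi fun i => ?_
      by_cases hi : i ∈ C
      · simp only [if_pos hi]; exact continuous_const
      · simp only [if_neg hi]
        exact ((continuous_apply (A := Z) i).comp ((continuous_apply (A := fun _ : ℕ => Profile Z) τ).comp continuous_fst))
    · simp only [if_neg h2]
      exact (continuous_apply (A := fun _ : ℕ => Profile Z) _).comp continuous_snd

lemma aux_disc_shift (hu : ∀ i, Continuous (u i)) (hδ0 : 0 < δ) (hδ1 : δ < 1) (i : N)
    (x : RPath Z) (k : ℕ) :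
    disc u δ i x = (1 - δ) * ∑ t ∈ Finset.range k, δ ^ t * u i (x t)
      + δ ^ k * disc u δ i fun n => x (n + k) := by
  have hs := aux_summable u δ hu hδ0 hδ1 i x
  unfold disc
  rw [← hs.sum_add_tsum_nat_add k]
  have h2 : ∑' (t : ℕ), δ ^ (t + k) * u i (x (t + k))
      = δ ^ k * ∑' (t : ℕ), δ ^ t * u i ((fun n => x (n + k)) t) := by
    rw [← tsum_mul_left]
    exact tsum_congr fun t => by ring
  rw [h2]; ring

lemma aux_disc_shift_iff (hu : ∀ i, Continuous (u i)) (hδ0 : 0 < δ) (hδ1 : δ < 1) (i : N)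
    (x y : RPath Z) (k : ℕ) (hagree : ∀ t, t < k → x t = y t) :
    disc u δ i x ≥ disc u δ i y ↔
      disc u δ i (fun n => x (n + k)) ≥ disc u δ i (fun n => y (n + k)) := by
  rw [aux_disc_shift u δ hu hδ0 hδ1 i x k, aux_disc_shift u δ hu hδ0 hδ1 i y k]
  have hsum : (∑ t ∈ Finset.range k, δ ^ t * u i (x t))
      = ∑ t ∈ Finset.range k, δ ^ t * u i (y t) :=
    Finset.sum_congr rfl fun t ht => by rw [hagree t (Finset.mem_range.mp ht)]
  rw [hsum, ge_iff_le, ge_iff_le, add_le_add_iff_left, mul_le_mul_iff_right₀ (pow_pos hδ0 k)]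

lemma aux_Psi_mono {Y Y' : Set (RPath Z)} (h : Y ⊆ Y') : Psi u δ Y ⊆ Psi u δ Y' := by
  intro x hx C hC τ ζ
  obtain ⟨p, hp, i, hi, hge⟩ := hx C hC τ ζ
  exact ⟨p, fun j => h (hp j), i, hi, hge⟩

lemma aux_Psi_isCompact (hu : ∀ i, Continuous (u i)) (hδ0 : 0 < δ) (hδ1 : δ < 1)
    {Y : Set (RPath Z)} (hY : IsCompact Y) : IsCompact (Psi u δ Y) := by
  rcases Y.eq_empty_or_nonempty with rfl | hNe
  · rcases isEmpty_or_nonempty N with hN | hN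
    · have : Psi u δ (∅ : Set (RPath Z)) = univ := by
        ext x
        simp only [Psi, mem_setOf_eq, mem_univ, iff_true]
        intro C hC
        obtain ⟨i, -⟩ := hC
        exact absurd (IsEmpty.false i) not_false
      rw [this]; exact isCompact_univ
    · have : Psi u δ (∅ : Set (RPath Z)) = ∅ := by
        ext x
        simp only [Psi, mem_setOf_eq, mem_empty_iff_false, iff_false]
        intro h
        obtain ⟨i⟩ := hN
        obtain ⟨p, hp, -⟩ := h {i} (Finset.singleton_nonempty i) 0 (Classical.arbitrary _)
        exact hp i
      rw [this]; exact isCompact_empty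
  · suffices h : IsClosed (Psi u δ Y) from h.isCompact
    obtain ⟨y₀, hy₀⟩ := hNe
    have hrw : Psi u δ Y = ⋂ C : Finset N, ⋂ _ : C.Nonempty, ⋂ τ : ℕ, ⋂ ζ : Profile Z,
        ⋃ i ∈ C, {x | ∃ y ∈ Y, disc u δ i x ≥ disc u δ i (splice x C τ ζ y)} := by
      ext x
      simp only [Psi, mem_setOf_eq, mem_iInter, mem_iUnion]
      constructor
      · intro h C hC τ ζ
        obtain ⟨p, hp, i, hi, hge⟩ := h C hC τ ζ
        exact ⟨i, hi, ⟨p i, hp i, hge⟩⟩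
      · intro h C hC τ ζ
        obtain ⟨i, hi, y, hy, hge⟩ := h C hC τ ζ
        classical
        refine ⟨fun j => if j = i then y else y₀, fun j => ?_, i, hi, ?_⟩
        · dsimp only; split <;> assumption
        · simpa using hge
    rw [hrw]
    refine isClosed_iInter fun C => isClosed_iInter fun _ => isClosed_iInter fun τ =>
      isClosed_iInter fun ζ => C.finite_toSet.isClosed_biUnion fun i _ => ?_
    haveI : CompactSpace Y := isCompact_iff_compactSpace.mp hY
    have hcont : Continuous fun q : Y × RPath Z =>
        disc u δ i q.2 - disc u δ i (splice q.2 C τ ζ (q.1 : RPath Z)) := by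
      have h1 : Continuous fun q : Y × RPath Z => splice q.2 C τ ζ (q.1 : RPath Z) :=
        (aux_continuous_splice C τ ζ).comp
          (continuous_snd.prodMk (continuous_subtype_val.comp continuous_fst))
      exact ((aux_continuous_disc u δ hu hδ0 hδ1 i).comp continuous_snd).sub
        ((aux_continuous_disc u δ hu hδ0 hδ1 i).comp h1)
    have himg : {x : RPath Z | ∃ y ∈ Y, disc u δ i x ≥ disc u δ i (splice x C τ ζ y)}
        = Prod.snd '' {q : Y × RPath Z |
            0 ≤ disc u δ i q.2 - disc u δ i (splice q.2 C τ ζ (q.1 : RPath Z))} := by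
      ext x
      simp only [mem_setOf_eq, mem_image, Prod.exists, Subtype.exists]
      constructor
      · rintro ⟨y, hy, hge⟩
        exact ⟨y, hy, x, by simpa using sub_nonneg.mpr hge, rfl⟩
      · rintro ⟨y, hy, x', hx', rfl⟩
        exact ⟨y, hy, sub_nonneg.mp (by simpa using hx')⟩
    rw [himg]
    exact isClosedMap_snd_of_compactSpace _
      (isClosed_le continuous_const hcont)
lemma aux_planPath_mem_PCEP {f : Hist Z → Profile Z} (hf : IsPCE u δ f) (h : Hist Z) :
    planPath f h ∈ PCEP u δ := by
  have key : ∀ (l : Hist Z) (n : ℕ),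
      h ++ planHist (fun l => f (h ++ l)) l n = planHist f (h ++ l) n := by
    intro l n
    induction n with
    | zero => rfl
    | succ n ih =>
      show h ++ (planHist (fun l => f (h ++ l)) l n ++ [f (h ++ planHist (fun l => f (h ++ l)) l n)])
        = planHist f (h ++ l) n ++ [f (planHist f (h ++ l) n)]
      rw [← List.append_assoc, ih]
  have key2 : ∀ l : Hist Z, planPath (fun l => f (h ++ l)) l = planPath f (h ++ l) := by
    intro l
    funext n
    show f (h ++ planHist (fun l => f (h ++ l)) l n) = f (planHist f (h ++ l) n)
    rw [key]
  refine ⟨fun l => f (h ++ l), ?_, ?_⟩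
  · intro l C hC τ ζ
    have hdev : h ++ devHistory l (planPath f (h ++ l)) C τ ζ
        = devHistory (h ++ l) (planPath f (h ++ l)) C τ ζ := by
      simp only [devHistory, List.append_assoc]
    have := hf (h ++ l) C hC τ ζ
    rw [key2 l, key2 _, hdev]
    exact this
  · rw [key2 [], List.append_nil]

lemma aux_PCEP_subset_Psi : PCEP u δ ⊆ Psi u δ (PCEP u δ) := by
  rintro x ⟨f, hf, rfl⟩
  intro C hC τ ζ
  obtain ⟨i, hi, hge⟩ := hf [] C hC τ ζ
  exact ⟨fun _ => planPath f (devHistory [] (planPath f []) C τ ζ),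
    fun _ => aux_planPath_mem_PCEP u δ hf _, i, hi, hge⟩

lemma aux_selfgen (hu : ∀ i, Continuous (u i)) (hδ0 : 0 < δ) (hδ1 : δ < 1)
    {W : Set (RPath Z)} (hW : W ⊆ Psi u δ W) : W ⊆ PCEP u δ := by
  classical
  intro x hx
  set Cof : RPath Z → ℕ → Profile Z → Finset N :=
    fun w m z => Finset.univ.filter (fun i => z i ≠ w m i) with hCof
  have hCof_ne : ∀ w m z, z ≠ w m → (Cof w m z).Nonempty := by
    intro w m z hz
    rw [hCof, Finset.filter_nonempty_iff]
    obtain ⟨i, hi⟩ := Function.ne_iff.mp hz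
    exact ⟨i, Finset.mem_univ i, hi⟩
  have hCof_not_mem : ∀ w m z i, i ∉ Cof w m z → z i = w m i := by
    intro w m z i hi
    simpa [hCof, Finset.mem_filter] using hi
  have hdevCof : ∀ w m z, devProfile w (Cof w m z) m z = z := by
    intro w m z
    funext i
    by_cases hi : i ∈ Cof w m z
    · exact if_pos hi
    · rw [devProfile]; (try dsimp only); rw [if_neg hi, hCof_not_mem w m z i hi]
  have hch : ∀ (w : RPath Z) (m : ℕ) (z : Profile Z),
      ∃ q : RPath Z, w ∈ W → (Cof w m z).Nonempty → q ∈ W ∧ ∃ i ∈ Cof w m z,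
        disc u δ i w ≥ disc u δ i (splice w (Cof w m z) m z q) := by
    intro w m z
    by_cases hw : w ∈ W ∧ (Cof w m z).Nonempty
    · obtain ⟨p, hp, i, hi, hge⟩ := hW hw.1 (Cof w m z) hw.2 m z
      exact ⟨p i, fun _ _ => ⟨hp i, i, hi, hge⟩⟩
    · exact ⟨w, fun h1 h2 => absurd ⟨h1, h2⟩ hw⟩
  choose Q hQ using hch
  set step : RPath Z × ℕ → Profile Z → RPath Z × ℕ :=
    fun s z => if z = s.1 s.2 then (s.1, s.2 + 1) else (Q s.1 s.2 z, 0) with hstep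
  set st : Hist Z → RPath Z × ℕ := fun h => h.foldl step (x, 0) with hst
  set F : Hist Z → Profile Z := fun h => (st h).1 (st h).2 with hF
  have hst_nil : st [] = (x, 0) := rfl
  have hst_app : ∀ (h : Hist Z) (z : Profile Z), st (h ++ [z]) = step (st h) z := by
    intro h z; simp [hst, List.foldl_append]
  have hstW : ∀ h : Hist Z, (st h).1 ∈ W := by
    intro h
    induction h using List.reverseRecOn with
    | nil => exact hx
    | append_singleton h z ih =>
      rw [hst_app, hstep]
      try dsimp only
      split_ifs with hz
      · exact ih
      · exact (hQ (st h).1 (st h).2 z ih (hCof_ne _ _ _ hz)).1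
  have hstate : ∀ (h : Hist Z) (n : ℕ),
      st (planHist F h n) = ((st h).1, (st h).2 + n) := by
    intro h n
    induction n with
    | zero => simp [planHist]
    | succ n ih =>
      show st (planHist F h n ++ [F (planHist F h n)]) = _
      have hFval : F (planHist F h n) = (st h).1 ((st h).2 + n) := by
        rw [hF]; (try dsimp only); rw [ih]
      rw [hst_app, hFval, ih, hstep]
      try dsimp only
      rw [if_pos rfl, add_assoc]
  have hpath : ∀ (h : Hist Z) (n : ℕ), planPath F h n = (st h).1 ((st h).2 + n) := by
    intro h n
    show F (planHist F h n) = _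
    rw [hF]; (try dsimp only); rw [hstate]
  have hplan : ∀ (h : Hist Z) (m : ℕ),
      planHist F h m = h ++ List.ofFn (fun t : Fin m => planPath F h t) := by
    intro h m
    induction m with
    | zero => simp [planHist]
    | succ m ih =>
      show planHist F h m ++ [F (planHist F h m)] = _
      rw [List.ofFn_succ']
      have hcs : (fun i : Fin m => planPath F h (i.castSucc : ℕ))
          = (fun t : Fin m => planPath F h t) := by
        funext t; rfl
      rw [List.concat_eq_append, ← List.append_assoc, hcs, ← ih]
      rfl
  refine ⟨F, ?_, ?_⟩
  · -- IsPCE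
    intro h C hC τ ζ
    set w : RPath Z := (st h).1 with hw
    set k : ℕ := (st h).2 with hk
    set π : RPath Z := planPath F h with hπdef
    have hπ : ∀ n, π n = w (k + n) := fun n => hpath h n
    set z : Profile Z := devProfile π C τ ζ with hz
    have hdev_split : devHistory h π C τ ζ = planHist F h τ ++ [z] := by
      rw [devHistory, hplan h τ]
    have hstdev : st (devHistory h π C τ ζ) = step (w, k + τ) z := by
      rw [hdev_split, hst_app, hstate]
    by_cases hzw : z = w (k + τ)
    · -- no actual deviation
      have hstdev' : st (devHistory h π C τ ζ) = (w, k + τ + 1) := by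
        rw [hstdev, hstep]; (try dsimp only); rw [if_pos hzw]
      set y : RPath Z := planPath F (devHistory h π C τ ζ) with hy
      have hyn : ∀ n, y n = w (k + τ + 1 + n) := by
        intro n
        rw [hy, hpath, hstdev']
      have hsp : splice π C τ ζ y = π := by
        funext t
        rw [splice]
        try dsimp only
        by_cases h1 : t < τ
        · rw [if_pos h1]
        · rw [if_neg h1]
          by_cases h2 : t = τ
          · rw [if_pos h2, ← hz, hzw, h2, hπ]
          · rw [if_neg h2, hyn, hπ]
            exact congrArg w (by omega)
      obtain ⟨i, hi⟩ := hC
      exact ⟨i, hi, ge_of_eq (by rw [hsp])⟩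
    · -- actual deviation
      have hCne := hCof_ne w (k + τ) z hzw
      obtain ⟨hQW, i, hiCof, hge⟩ := hQ w (k + τ) z (hstW h) hCne
      have hstdev' : st (devHistory h π C τ ζ) = (Q w (k + τ) z, 0) := by
        rw [hstdev, hstep]; (try dsimp only); rw [if_neg hzw]
      set y : RPath Z := planPath F (devHistory h π C τ ζ) with hy
      have hyq : y = Q w (k + τ) z := by
        funext n
        rw [hy, hpath, hstdev']
        exact congrArg _ (Nat.zero_add n)
      have hiC : i ∈ C := by
        by_contra hiC
        have h1 : z i = π τ i := by
          rw [hz, devProfile]; (try dsimp only); rw [if_neg hiC]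
        have h2 : π τ i = w (k + τ) i := by rw [hπ]
        have : z i ≠ w (k + τ) i := by
          have := hiCof
          simpa [hCof, Finset.mem_filter] using this
        exact this (h1.trans h2)
      refine ⟨i, hiC, ?_⟩
      have hshift := (aux_disc_shift_iff u δ hu hδ0 hδ1 i w
        (splice w (Cof w (k + τ) z) (k + τ) z (Q w (k + τ) z)) k
        (fun t ht => by rw [splice]; (try dsimp only); rw [if_pos (by omega)])).mp hge
      have e1 : (fun n => w (n + k)) = π := by
        funext n; rw [hπ, Nat.add_comm]
      have e2 : (fun n => splice w (Cof w (k + τ) z) (k + τ) z (Q w (k + τ) z) (n + k))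
          = splice π C τ ζ y := by
        funext t
        rw [splice, splice]
        try dsimp only
        by_cases h1 : t < τ
        · rw [if_pos (show t + k < k + τ by omega), if_pos h1, hπ]
          exact congrArg w (by omega)
        · by_cases h2 : t = τ
          · rw [if_neg (show ¬ t + k < k + τ by omega), if_pos (show t + k = k + τ by omega),
              if_neg h1, if_pos h2, hdevCof]
          · rw [if_neg (show ¬ t + k < k + τ by omega), if_neg (show ¬ t + k = k + τ by omega),
              if_neg h1, if_neg h2, hyq]
            exact congrArg _ (by omega)
      rw [e1, e2] at hshift
      exact hshift
  · -- planPath F [] = x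
    funext n
    rw [hpath, hst_nil]
    exact congrArg x (Nat.zero_add n)
lemma aux_iInter_subset_Psi (hu : ∀ i, Continuous (u i)) (hδ0 : 0 < δ) (hδ1 : δ < 1) :
    (⋂ k : ℕ, (Psi u δ)^[k] Set.univ) ⊆ Psi u δ (⋂ k : ℕ, (Psi u δ)^[k] Set.univ) := by
  classical
  set X : ℕ → Set (RPath Z) := fun k => (Psi u δ)^[k] Set.univ with hX
  have hXsucc : ∀ k, X (k + 1) = Psi u δ (X k) := fun k => Function.iterate_succ_apply' _ _ _
  have hXcompact : ∀ k, IsCompact (X k) := by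
    intro k
    induction k with
    | zero => exact isCompact_univ
    | succ k ih => rw [hXsucc]; exact aux_Psi_isCompact u δ hu hδ0 hδ1 ih
  have hXdec : ∀ k, X (k + 1) ⊆ X k := by
    intro k
    induction k with
    | zero => exact subset_univ _
    | succ k ih =>
      have h2 := aux_Psi_mono u δ ih
      rwa [← hXsucc k, ← hXsucc (k + 1)] at h2
  have hXanti : ∀ {a b : ℕ}, a ≤ b → X b ⊆ X a := by
    intro a b hab
    induction hab with
    | refl => exact subset_rfl
    | step _ ih => exact (hXdec _).trans ih
  intro x hx C hC τ ζ
  have h1 : ∀ k : ℕ, ∃ (i : {i // i ∈ C}) (y : RPath Z), y ∈ X k ∧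
      disc u δ (i : N) x ≥ disc u δ (i : N) (splice x C τ ζ y) := by
    intro k
    have hx' : x ∈ Psi u δ (X k) := by
      have := mem_iInter.mp hx (k + 1)
      rwa [show ((Psi u δ)^[k+1] Set.univ : Set (RPath Z)) = Psi u δ (X k) from hXsucc k] at this
    obtain ⟨p, hp, i, hi, hge⟩ := hx' C hC τ ζ
    exact ⟨⟨i, hi⟩, p i, hp i, hge⟩
  choose g y hyX hyge using h1
  haveI : Nonempty {i // i ∈ C} := ⟨⟨hC.choose, hC.choose_spec⟩⟩
  obtain ⟨i, hinf⟩ := Finite.exists_infinite_fiber g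
  have hinf' : (g ⁻¹' {i}).Infinite := Set.infinite_coe_iff.mp hinf
  set T : Set (RPath Z) :=
    {y' | disc u δ (i : N) x ≥ disc u δ (i : N) (splice x C τ ζ y')} with hT
  have hTclosed : IsClosed T := by
    have hc : Continuous fun y' : RPath Z => disc u δ (i : N) (splice x C τ ζ y') :=
      (aux_continuous_disc u δ hu hδ0 hδ1 i).comp
        ((aux_continuous_splice C τ ζ).comp (continuous_const.prodMk continuous_id))
    exact isClosed_le hc continuous_const
  have hne : ∀ m, (X m ∩ T).Nonempty := by
    intro m
    obtain ⟨k, hk, hmk⟩ := hinf'.exists_gt m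
    rw [mem_preimage, mem_singleton_iff] at hk
    refine ⟨y k, hXanti (le_of_lt hmk) (hyX k), ?_⟩
    have := hyge k
    rwa [hk] at this
  obtain ⟨y₁, hy₁⟩ := IsCompact.nonempty_iInter_of_sequence_nonempty_isCompact_isClosed
    (fun m => X m ∩ T)
    (fun m => inter_subset_inter_left T (hXdec m))
    hne
    ((hXcompact 0).inter_right hTclosed)
    (fun m => (hXcompact m).isClosed.inter hTclosed)
  have hy₁X : y₁ ∈ ⋂ k, X k := by
    rw [mem_iInter]; exact fun k => (mem_iInter.mp hy₁ k).1
  have hy₁T : y₁ ∈ T := (mem_iInter.mp hy₁ 0).2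
  exact ⟨fun _ => y₁, fun _ => hy₁X, i, i.2, hy₁T⟩
end AuxProof

theorem PCEP_compact_eq_iInter {N : Type*} [Fintype N] [DecidableEq N] {Z : N → Type*}
    [∀ i, MetricSpace (Z i)] [∀ i, CompactSpace (Z i)] [∀ i, Nonempty (Z i)]
    (u : N → Profile Z → ℝ) (δ : ℝ)
    (hu : ∀ i, Continuous (u i)) (hδ0 : 0 < δ) (hδ1 : δ < 1) :
    IsCompact (PCEP u δ) ∧ PCEP u δ = ⋂ k : ℕ, (Psi u δ)^[k] Set.univ := by
  have hXcompact : ∀ k, IsCompact ((Psi u δ)^[k] (Set.univ : Set (RPath Z))) := by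
    intro k
    induction k with
    | zero => exact isCompact_univ
    | succ k ih => rw [Function.iterate_succ_apply']; exact aux_Psi_isCompact u δ hu hδ0 hδ1 ih
  have heq : PCEP u δ = ⋂ k : ℕ, (Psi u δ)^[k] Set.univ := by
    apply Subset.antisymm
    · refine subset_iInter fun k => ?_
      induction k with
      | zero => exact subset_univ _
      | succ k ih =>
        rw [Function.iterate_succ_apply']
        exact (aux_PCEP_subset_Psi u δ).trans (aux_Psi_mono u δ ih)
    · exact aux_selfgen u δ hu hδ0 hδ1 (aux_iInter_subset_Psi u δ hu hδ0 hδ1)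
  refine ⟨?_, heq⟩
  rw [heq]
  exact (isClosed_iInter fun k => (hXcompact k).isClosed).isCompact
end

section
/- Closure preserves conservative internal stability: if σ is a nondiscriminating conservatively internally stable standard of behavior for the coalitional repeated game situation (γ^C, Γ), then the standard of behavior σ̃ defined by σ̃(G) = closure of σ(G) is also nondiscriminating and conservatively internally stable; moreover if σ(G⁰) ≠ ∅ then σ̃(G⁰) is nonempty and compact. -/
open Set

set_option linter.unusedSectionVars false

section Aux

variable {N : Type*} [Fintype N] [DecidableEq N] {Z : N → Type*}
variable [∀ i, MetricSpace (Z i)] [∀ i, CompactSpace (Z i)] [∀ i, Nonempty (Z i)]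

/-- `disc` is continuous in the path. -/
lemma disc_continuous (u : N → Profile Z → ℝ) (δ : ℝ) (hu : ∀ i, Continuous (u i))
    (hδ0 : 0 < δ) (hδ1 : δ < 1) (i : N) : Continuous (disc u δ i) := by
  obtain ⟨M, hM⟩ := (isCompact_range ((hu i).abs)).bddAbove
  apply Continuous.mul continuous_const
  apply continuous_tsum (f := fun t (x : RPath Z) => δ ^ t * u i (x t))
    (u := fun t => δ ^ t * M)
  · intro t
    exact continuous_const.mul ((hu i).comp (continuous_apply t))
  · exact (summable_geometric_of_lt_one hδ0.le hδ1).mul_right M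
  · intro n x
    have h1 : |u i (x n)| ≤ M := hM ⟨x n, rfl⟩
    have : ‖δ ^ n * u i (x n)‖ = δ ^ n * |u i (x n)| := by
      rw [norm_mul, Real.norm_eq_abs, Real.norm_eq_abs, abs_pow, abs_of_pos hδ0]
    rw [this]
    exact mul_le_mul_of_nonneg_left h1 (pow_nonneg hδ0.le n)

/-- Finite history-sum helper. -/
noncomputable def hSum (u : Profile Z → ℝ) (δ : ℝ) (L : Hist Z) : ℝ :=
  ∑ t : Fin L.length, δ ^ (t : ℕ) * u (L.get t)

lemma hSum_nil (u : Profile Z → ℝ) (δ : ℝ) : hSum u δ ([] : Hist Z) = 0 := by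
  simp [hSum]

lemma hSum_cons (u : Profile Z → ℝ) (δ : ℝ) (a : Profile Z) (L : Hist Z) :
    hSum u δ (a :: L) = u a + δ * hSum u δ L := by
  unfold hSum
  show ∑ t : Fin (L.length + 1), δ ^ (t : ℕ) * u ((a :: L).get t) = _
  rw [Fin.sum_univ_succ]
  simp [pow_succ', mul_assoc, Finset.mul_sum]

lemma hSum_append (u : Profile Z → ℝ) (δ : ℝ) (A B : Hist Z) :
    hSum u δ (A ++ B) = hSum u δ A + δ ^ A.length * hSum u δ B := by
  induction A with
  | nil => simp [hSum_nil]
  | cons a A ih =>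
    rw [List.cons_append, hSum_cons, hSum_cons, ih]
    rw [show (a :: A).length = A.length + 1 from rfl]
    ring

lemma hSum_singleton (u : Profile Z → ℝ) (δ : ℝ) (a : Profile Z) :
    hSum u δ [a] = u a := by
  rw [hSum_cons, hSum_nil]; ring

lemma hSum_ofFn (u : Profile Z → ℝ) (δ : ℝ) (τ : ℕ) (f : ℕ → Profile Z) :
    hSum u δ (List.ofFn fun t : Fin τ => f t) = ∑ t : Fin τ, δ ^ (t : ℕ) * u (f t) := by
  induction τ generalizing f with
  | zero => simp [hSum_nil]
  | succ n ih =>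
    rw [List.ofFn_succ, hSum_cons]
    have hih := ih (fun t => f (t + 1))
    simp only [Fin.val_succ]
    rw [hih, Fin.sum_univ_succ]
    simp [pow_succ', mul_assoc, Finset.mul_sum, Fin.val_succ]

lemma posPayoff_eq (u : N → Profile Z → ℝ) (δ : ℝ) (i : N) (G : Hist Z) (x : RPath Z) :
    posPayoff u δ i G x = (1 - δ) * hSum (u i) δ G + δ ^ G.length * disc u δ i x := rfl

lemma devHistory_length (G : Hist Z) (x : RPath Z) (C : Finset N) (τ : ℕ) (ζ : Profile Z) :
    (devHistory G x C τ ζ).length = G.length + τ + 1 := by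
  simp [devHistory]
  omega

lemma posPayoff_devHistory (u : N → Profile Z → ℝ) (δ : ℝ) (i : N) (G : Hist Z)
    (x : RPath Z) (C : Finset N) (τ : ℕ) (ζ : Profile Z) (y : RPath Z) :
    posPayoff u δ i (devHistory G x C τ ζ) y =
      (1 - δ) * (hSum (u i) δ G
        + δ ^ G.length * ((∑ t : Fin τ, δ ^ (t : ℕ) * u i (x t))
          + δ ^ τ * u i (devProfile x C τ ζ)))
      + δ ^ (G.length + τ + 1) * disc u δ i y := by
  rw [posPayoff_eq, devHistory_length]
  unfold devHistory
  rw [hSum_append, hSum_append, hSum_singleton, hSum_ofFn]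
  have : (G ++ List.ofFn fun t : Fin τ => x ↑t).length = G.length + τ := by simp
  rw [this]
  ring

lemma posPayoff_sub (u : N → Profile Z → ℝ) (δ : ℝ) (i : N) (A : Hist Z)
    (y y' : RPath Z) :
    posPayoff u δ i A y - posPayoff u δ i A y'
      = δ ^ A.length * (disc u δ i y - disc u δ i y') := by
  rw [posPayoff_eq, posPayoff_eq]; ring

lemma continuous_devHistoryPayoff (u : N → Profile Z → ℝ) (δ : ℝ)
    (hu : ∀ i, Continuous (u i)) (i : N) (G : Hist Z) (C : Finset N) (τ : ℕ)
    (ζ : Profile Z) (y : RPath Z) :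
    Continuous fun x : RPath Z => posPayoff u δ i (devHistory G x C τ ζ) y := by
  simp only [posPayoff_devHistory]
  have h1 : Continuous fun x : RPath Z => ∑ t : Fin τ, δ ^ (t : ℕ) * u i (x t) := by
    apply continuous_finset_sum
    intro t _
    exact continuous_const.mul ((hu i).comp (continuous_apply (t : ℕ)))
  have h2 : Continuous fun x : RPath Z => devProfile x C τ ζ := by
    apply continuous_pi
    intro j
    unfold devProfile
    by_cases hj : j ∈ C
    · simp only [hj, if_true]
      exact continuous_const
    · simp only [hj, if_false]
      exact (continuous_apply j).comp (continuous_apply τ)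
  continuity

lemma continuous_posPayoff_path (u : N → Profile Z → ℝ) (δ : ℝ)
    (hu : ∀ i, Continuous (u i)) (hδ0 : 0 < δ) (hδ1 : δ < 1) (i : N) (G : Hist Z) :
    Continuous fun x : RPath Z => posPayoff u δ i G x := by
  simp only [posPayoff_eq]
  exact continuous_const.add (continuous_const.mul (disc_continuous u δ hu hδ0 hδ1 i))

end Aux

theorem closure_internally_stable {N : Type*} [Fintype N] [DecidableEq N] {Z : N → Type*}
    [∀ i, MetricSpace (Z i)] [∀ i, CompactSpace (Z i)] [∀ i, Nonempty (Z i)]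
    (u : N → Profile Z → ℝ) (δ : ℝ)
    (hu : ∀ i, Continuous (u i)) (hδ0 : 0 < δ) (hδ1 : δ < 1)
    (σ : Hist Z → Set (RPath Z)) (hnd : Nondiscriminating σ)
    (his : ConsInternallyStable u δ σ) :
    Nondiscriminating (fun G => closure (σ G)) ∧
    ConsInternallyStable u δ (fun G => closure (σ G)) ∧
    ((σ ([] : Hist Z)).Nonempty →
      (closure (σ ([] : Hist Z))).Nonempty ∧ IsCompact (closure (σ ([] : Hist Z)))) := by
  refine ⟨fun G H => congrArg closure (hnd G H), ?_, fun hne =>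
    ⟨hne.mono subset_closure, isClosed_closure.isCompact⟩⟩
  -- internal stability of the closure
  intro G
  rw [Set.eq_empty_iff_forall_notMem]
  rintro x ⟨hxcl, C, hC, τ, ζ, hne, hdom⟩
  simp only at hxcl hne hdom
  -- by nondiscrimination everything is σ G
  have hσ : ∀ H, σ H = σ G := fun H => hnd H G
  rw [hσ] at hne hdom
  set S := σ G with hS
  have hKc : IsCompact (closure S) := isClosed_closure.isCompact
  have hKne : (closure S).Nonempty := hne
  -- minimizer of each player's discounted payoff on the closure
  have hdc : ∀ i : N, Continuous (disc u δ i) := fun i => disc_continuous u δ hu hδ0 hδ1 i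
  -- choose, for each i, a minimizer y* i of disc on closure S
  have hmin : ∀ i : N, ∃ y ∈ closure S, ∀ z ∈ closure S, disc u δ i y ≤ disc u δ i z := by
    intro i
    obtain ⟨y, hy, hmin⟩ := hKc.exists_isMinOn hKne ((hdc i).continuousOn)
    exact ⟨y, hy, fun z hz => hmin hz⟩
  choose ystar hystar hystarmin using hmin
  -- the "gap" function for each player, continuous in the path variable
  set F : N → RPath Z → ℝ := fun i x' =>
    posPayoff u δ i (devHistory G x' C τ ζ) (ystar i) - posPayoff u δ i G x' with hF
  have hFc : ∀ i, Continuous (F i) := by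
    intro i
    exact (continuous_devHistoryPayoff u δ hu i G C τ ζ (ystar i)).sub
      (continuous_posPayoff_path u δ hu hδ0 hδ1 i G)
  have hFx : ∀ i ∈ C, 0 < F i x := by
    intro i hi
    have := hdom (ystar i) (hystar i) i hi
    simp only [hF]
    linarith
  -- open neighborhood of x where all gaps are positive
  set U : Set (RPath Z) := ⋂ i ∈ C, {x' | 0 < F i x'} with hU
  have hUopen : IsOpen U := by
    apply isOpen_biInter_finset
    intro i _
    exact isOpen_lt continuous_const (hFc i)
  have hxU : x ∈ U := by
    simp only [hU, Set.mem_iInter]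
    intro i hi
    exact hFx i hi
  -- find a point of S inside U
  obtain ⟨x', hx'U, hx'S⟩ := mem_closure_iff.mp hxcl U hUopen hxU
  -- x' is conservatively dominated relative to σ, contradiction with internal stability
  have hx'dom : x' ∈ CDOM u δ σ G := by
    refine ⟨C, hC, τ, ζ, ?_, ?_⟩
    · rw [hσ]
      exact closure_nonempty_iff.mp hKne
    · intro y hy i hi
      rw [hσ] at hy
      have h1 : 0 < F i x' := by
        have := Set.mem_iInter.mp hx'U
        simpa using Set.mem_iInter.mp (Set.mem_iInter.mp hx'U i) hi
      have h2 : disc u δ i (ystar i) ≤ disc u δ i y :=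
        hystarmin i y (subset_closure hy)
      have h3 : posPayoff u δ i (devHistory G x' C τ ζ) y
          - posPayoff u δ i (devHistory G x' C τ ζ) (ystar i)
          = δ ^ (devHistory G x' C τ ζ).length * (disc u δ i y - disc u δ i (ystar i)) :=
        posPayoff_sub u δ i _ y (ystar i)
      have h4 : (0:ℝ) ≤ δ ^ (devHistory G x' C τ ζ).length
          * (disc u δ i y - disc u δ i (ystar i)) :=
        mul_nonneg (pow_nonneg hδ0.le _) (by linarith)
      simp only [hF] at h1
      linarith
  have := his G
  rw [Set.eq_empty_iff_forall_notMem] at this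
  exact this x' ⟨hx'S, hx'dom⟩
end

section
/- If {Y^k}_{k≥0} is a decreasing sequence of compact subsets of X with Y^{k+1} = Ψ(Y^k), then the intersection Y^∞ = ⋂_k Y^k satisfies Y^∞ ⊆ Ψ(Y^∞). -/
open Set

section Aux

variable {N : Type*} [Fintype N] [DecidableEq N] {Z : N → Type*}
  [∀ i, MetricSpace (Z i)] [∀ i, CompactSpace (Z i)] [∀ i, Nonempty (Z i)]

lemma continuous_disc (u : N → Profile Z → ℝ) (δ : ℝ) (i : N)
    (hu : ∀ i, Continuous (u i)) (hδ0 : 0 < δ) (hδ1 : δ < 1) :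
    Continuous (disc u δ i) := by
  obtain ⟨M, hM⟩ := isCompact_univ.exists_bound_of_continuousOn (hu i).continuousOn
  apply Continuous.mul continuous_const
  apply continuous_tsum (f := fun t (x : RPath Z) => δ ^ t * u i (x t))
    (u := fun t => δ ^ t * M)
  · intro t
    exact continuous_const.mul ((hu i).comp (continuous_apply t))
  · exact (summable_geometric_of_lt_one hδ0.le hδ1).mul_right M
  · intro n x
    rw [Real.norm_eq_abs, abs_mul, abs_pow, abs_of_pos hδ0]
    exact mul_le_mul_of_nonneg_left (hM (x n) trivial) (by positivity)

lemma continuous_splice (x : RPath Z) (C : Finset N) (τ : ℕ) (ζ : Profile Z) :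
    Continuous (fun y : RPath Z => splice x C τ ζ y) := by
  apply continuous_pi
  intro t
  unfold splice
  by_cases h1 : t < τ
  · simpa [h1] using continuous_const
  · by_cases h2 : t = τ
    · simpa [h1, h2] using continuous_const
    · simpa [h1, h2] using continuous_apply (t - τ - 1)

end Aux

theorem iInter_self_generating {N : Type*} [Fintype N] [DecidableEq N] {Z : N → Type*}
    [∀ i, MetricSpace (Z i)] [∀ i, CompactSpace (Z i)] [∀ i, Nonempty (Z i)]
    (u : N → Profile Z → ℝ) (δ : ℝ)
    (hu : ∀ i, Continuous (u i)) (hδ0 : 0 < δ) (hδ1 : δ < 1)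
    (Y : ℕ → Set (RPath Z)) (hdec : ∀ k, Y (k + 1) ⊆ Y k)
    (hcomp : ∀ k, IsCompact (Y k)) (hiter : ∀ k, Y (k + 1) = Psi u δ (Y k)) :
    (⋂ k, Y k) ⊆ Psi u δ (⋂ k, Y k) := by
  have hanti : Antitone Y := antitone_nat_of_succ_le hdec
  intro x hx
  have hxk : ∀ k, x ∈ Y k := fun k => mem_iInter.mp hx k
  intro C hC τ ζ
  -- for each k, extract punishments from x ∈ Y (k+1) = Psi (Y k)
  have hstep : ∀ k : ℕ, ∃ p : N → RPath Z, (∀ i, p i ∈ Y k) ∧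
      ∃ i ∈ C, disc u δ i x ≥ disc u δ i (splice x C τ ζ (p i)) := by
    intro k
    have := hxk (k + 1)
    rw [hiter k] at this
    exact this C hC τ ζ
  choose p hpY hgood using hstep
  choose idx hidxC hineq using hgood
  -- pigeonhole: some i ∈ C realized infinitely often
  have hpig : ∃ i ∈ C, {k : ℕ | idx k = i}.Infinite := by
    by_contra h
    push_neg at h
    have hfin : (⋃ i ∈ C, {k : ℕ | idx k = i}).Finite :=
      Set.Finite.biUnion C.finite_toSet fun i hi => h i hi
    have : (Set.univ : Set ℕ).Finite := by
      refine hfin.subset fun k _ => ?_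
      exact Set.mem_biUnion (hidxC k) rfl
    exact Set.infinite_univ this
  obtain ⟨i, hiC, hinf⟩ := hpig
  -- enumerate that infinite set
  set P : ℕ → Prop := fun k => idx k = i with hP
  have hinf' : (setOf P).Infinite := hinf
  set φ : ℕ → ℕ := Nat.nth P with hφ
  have hφmono : StrictMono φ := Nat.nth_strictMono hinf'
  have hφmem : ∀ m, idx (φ m) = i := fun m => Nat.nth_mem_of_infinite hinf' m
  -- extract a convergent subsequence in the compact set Y 0
  have hmem0 : ∀ m, p (φ m) i ∈ Y 0 := fun m => hanti (Nat.zero_le _) (hpY (φ m) i)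
  obtain ⟨a, haY0, ψ, hψmono, htend⟩ :=
    (hcomp 0).tendsto_subseq (x := fun m => p (φ m) i) hmem0
  -- the limit lies in every Y K
  have haK : a ∈ ⋂ k, Y k := by
    refine mem_iInter.mpr fun K => ?_
    refine (hcomp K).isClosed.mem_of_tendsto htend ?_
    filter_upwards [Filter.eventually_ge_atTop K] with m hm
    exact hanti (le_trans hm (le_trans (hψmono.le_apply) (hφmono.le_apply))) (hpY (φ (ψ m)) i)
  -- punishments: a for i, x otherwise
  refine ⟨fun j => if j = i then a else x, ?_, ⟨i, hiC, ?_⟩⟩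
  · intro j
    by_cases hj : j = i
    · simpa [hj] using haK
    · simpa [hj] using hx
  · show disc u δ i x ≥ disc u δ i (splice x C τ ζ (if i = i then a else x))
    rw [if_pos rfl]
    -- pass the inequality to the limit by continuity
    have hcont : Continuous (fun y : RPath Z => disc u δ i (splice x C τ ζ y)) :=
      (continuous_disc u δ i hu hδ0 hδ1).comp (continuous_splice x C τ ζ)
    have htend2 : Filter.Tendsto (fun m => disc u δ i (splice x C τ ζ (p (φ (ψ m)) i)))
        Filter.atTop (nhds (disc u δ i (splice x C τ ζ a))) :=
      (hcont.tendsto a).comp htend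
    refine le_of_tendsto htend2 ?_
    filter_upwards with m
    have := hineq (φ (ψ m))
    rwa [hφmem (ψ m)] at this
end
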